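/- Let q be a prime power, m ≥ 1, and Q = F_q[x_1,x_2]/(x_1^{q^m}, x_2^{q^m}). For each integer k' with 0 ≤ k' ≤ (q^m - q)/(q - 1), the element y_{k'} := ∑_{i=k'}^{(q^m-q)/(q-1)} x_1^{((q^m-q)/(q-1) + k' - i)(q-1)} x_2^{i(q-1)} is invariant under the action of GL_2(F_q) on Q. -/

import Mathlib

open MvPolynomial Finset

/-- The action of `g ∈ GL_n(F)` on `F[x_1,…,x_n]` by linear substitution of variables. -/
noncomputable def glAct (F : Type) [Field F] (n : ℕ) (g : GL (Fin n) F) :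
    MvPolynomial (Fin n) F →ₐ[F] MvPolynomial (Fin n) F :=
  MvPolynomial.aeval fun i => ∑ j, (g : Matrix (Fin n) (Fin n) F) i j • MvPolynomial.X j

/-- The ideal `(x_1^N, …, x_n^N)`. -/
noncomputable def frobIdeal (F : Type) [Field F] (n N : ℕ) :
    Ideal (MvPolynomial (Fin n) F) :=
  Ideal.span (Set.range fun i : Fin n => (MvPolynomial.X i : MvPolynomial (Fin n) F) ^ N)

namespace Statement10Aux

/-- Substitution by an arbitrary matrix. -/
noncomputable def subAct (F : Type) [Field F] (M : Matrix (Fin 2) (Fin 2) F) :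
    MvPolynomial (Fin 2) F →ₐ[F] MvPolynomial (Fin 2) F :=
  MvPolynomial.aeval fun i => ∑ j, M i j • MvPolynomial.X j

theorem subAct_mul (F : Type) [Field F] (M M' : Matrix (Fin 2) (Fin 2) F)
    (z : MvPolynomial (Fin 2) F) :
    subAct F (M * M') z = subAct F M' (subAct F M z) := by
  have h : subAct F (M * M') = (subAct F M').comp (subAct F M) := by
    apply MvPolynomial.algHom_ext
    intro i
    simp only [subAct, aeval_X, AlgHom.comp_apply, map_sum, map_smul, Matrix.mul_apply,
      Finset.sum_smul, Finset.smul_sum, smul_smul]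
    rw [Finset.sum_comm]
  rw [h]; rfl

theorem subAct_X (F : Type) [Field F] (M : Matrix (Fin 2) (Fin 2) F) (i : Fin 2) :
    subAct F M (X i) = M i 0 • X 0 + M i 1 • X 1 := by
  simp [subAct, Fin.sum_univ_two]

theorem subAct_transvection_X (F : Type) [Field F] (a b : Fin 2) (hab : a ≠ b) (c : F)
    (i : Fin 2) :
    subAct F (Matrix.transvection a b c) (X i)
      = X i + (if i = a then C c * X b else 0) := by
  rw [subAct_X]
  fin_cases a <;> fin_cases b <;> fin_cases i <;>
    simp_all [Matrix.transvection, Matrix.one_apply, Matrix.single, Matrix.add_apply,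
      Matrix.of_apply, smul_eq_C_mul] <;> try ring

theorem subAct_diagonal_X (F : Type) [Field F] (d : Fin 2 → F) (i : Fin 2) :
    subAct F (Matrix.diagonal d) (X i) = C (d i) * X i := by
  rw [subAct_X]
  fin_cases i <;>
    simp [Matrix.diagonal_apply_eq, Matrix.diagonal_apply_ne, smul_eq_C_mul]

/-- The telescoping identity. -/
theorem telescope {R : Type*} [CommRing R] (x y : R) (q N k : ℕ) (hq : 1 ≤ q) (hk : k ≤ N) :
    (x ^ q * y - x * y ^ q) *
      ∑ i ∈ Finset.Icc k N, x ^ ((N + k - i) * (q - 1)) * y ^ (i * (q - 1)) =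
    x ^ ((N + 1) * (q - 1) + 1) * y ^ (k * (q - 1) + 1)
      - x ^ (k * (q - 1) + 1) * y ^ ((N + 1) * (q - 1) + 1) := by
  set G : ℕ → R := fun j => x ^ ((N + 1 - j) * (q - 1) + 1) * y ^ ((k + j) * (q - 1) + 1)
    with hG
  have base : ∀ a b : ℕ, (x ^ q * y - x * y ^ q) * (x ^ a * y ^ b)
      = x ^ (a + q) * y ^ (b + 1) - x ^ (a + 1) * y ^ (b + q) := by
    intro a b
    rw [pow_add, pow_add, pow_add, pow_add, pow_one, pow_one]; ring
  rw [Finset.mul_sum, ← Finset.Ico_add_one_right_eq_Icc, Finset.sum_Ico_eq_sum_range]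
  have hterm : ∀ j ∈ Finset.range (N + 1 - k),
      (x ^ q * y - x * y ^ q) *
        (x ^ ((N + k - (k + j)) * (q - 1)) * y ^ ((k + j) * (q - 1)))
      = G j - G (j + 1) := by
    intro j hj
    simp only [Finset.mem_range] at hj
    have h1 : N + k - (k + j) = N - j := by omega
    have h2 : (N - j) * (q - 1) + q = (N + 1 - j) * (q - 1) + 1 := by
      have e1 : N + 1 - j = (N - j) + 1 := by omega
      rw [e1, add_one_mul]; omega
    have h3 : (k + j) * (q - 1) + q = (k + (j + 1)) * (q - 1) + 1 := by
      have e3 : k + (j + 1) = (k + j) + 1 := by omega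
      rw [e3, add_one_mul]; omega
    have h4 : N + 1 - (j + 1) = N - j := by omega
    simp only [hG]
    rw [h1, base, h2, h3, h4]
  rw [Finset.sum_congr rfl hterm, Finset.sum_range_sub' G]
  have hG0 : G 0 = x ^ ((N + 1) * (q - 1) + 1) * y ^ (k * (q - 1) + 1) := by
    simp only [hG]
    norm_num
  have hGL : G (N + 1 - k) = x ^ (k * (q - 1) + 1) * y ^ ((N + 1) * (q - 1) + 1) := by
    have e1 : N + 1 - (N + 1 - k) = k := by omega
    have e2 : k + (N + 1 - k) = N + 1 := by omega
    simp only [hG]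
    rw [e1, e2]
  rw [hG0, hGL]

section Main

variable {F : Type} [Field F] [Fintype F]

theorem frob_add (q : ℕ) (hq : Fintype.card F = q) (t : ℕ) (u v : MvPolynomial (Fin 2) F) :
    (u + v) ^ q ^ t = u ^ q ^ t + v ^ q ^ t := by
  set p := ringChar F with hp
  haveI : CharP F p := ringChar.charP F
  obtain ⟨s, hprime, hs⟩ := FiniteField.card F p
  haveI : Fact p.Prime := ⟨hprime⟩
  have hqt : q ^ t = p ^ ((s : ℕ) * t) := by
    rw [← hq, hs, ← pow_mul]
  rw [hqt]
  exact add_pow_char_pow u v p ((s : ℕ) * t)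

omit [Fintype F] in
theorem prime_X0 : Prime (X 0 : MvPolynomial (Fin 2) F) := by
  rw [← MulEquiv.prime_iff (MvPolynomial.finSuccEquiv F 1).toMulEquiv]
  have h : (MvPolynomial.finSuccEquiv F 1).toMulEquiv (X 0) =
      (Polynomial.X : Polynomial (MvPolynomial (Fin 1) F)) := by
    simpa using MvPolynomial.finSuccEquiv_X_zero (R := F) (n := 1)
  rw [h]
  exact Polynomial.prime_X

omit [Fintype F] in
theorem prime_X1 : Prime (X 1 : MvPolynomial (Fin 2) F) := by
  rw [← MulEquiv.prime_iff (MvPolynomial.renameEquiv F (Equiv.swap (0 : Fin 2) 1)).toMulEquiv]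
  have h : (MvPolynomial.renameEquiv F (Equiv.swap (0 : Fin 2) 1)).toMulEquiv (X 1) =
      (X 0 : MvPolynomial (Fin 2) F) := by
    simp [MvPolynomial.renameEquiv_apply, MvPolynomial.rename_X]
  rw [h]
  exact prime_X0

/-- Numeric facts packaged. -/
theorem numfacts (q m : ℕ) (hq2 : 2 ≤ q) (hm : 1 ≤ m) :
    ((q ^ m - q) / (q - 1)) * (q - 1) = q ^ m - q ∧
      ((q ^ m - q) / (q - 1) + 1) * (q - 1) + 1 = q ^ m := by
  have hqm : q ≤ q ^ m := by
    calc q = q ^ 1 := (pow_one q).symm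
    _ ≤ q ^ m := Nat.pow_le_pow_right (by omega) hm
  have hdvd : (q - 1) ∣ (q ^ m - q) := by
    have h1 : (q - 1) ∣ (q ^ m - 1 ^ m) := Nat.sub_dvd_pow_sub_pow q 1 m
    have h2 : q ^ m - q = (q ^ m - 1 ^ m) - (q - 1) := by
      simp only [one_pow]; omega
    rw [h2]; exact Nat.dvd_sub h1 dvd_rfl
  have hNq : ((q ^ m - q) / (q - 1)) * (q - 1) = q ^ m - q := Nat.div_mul_cancel hdvd
  refine ⟨hNq, ?_⟩
  have e : ((q ^ m - q) / (q - 1) + 1) * (q - 1)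
      = ((q ^ m - q) / (q - 1)) * (q - 1) + (q - 1) := by ring
  omega

/-- Upper transvection case : `X 0 ↦ X 0 + c • X 1`. -/
theorem upper_mem (q m k : ℕ) (hq : Fintype.card F = q) (hm : 1 ≤ m)
    (hk : k ≤ (q ^ m - q) / (q - 1)) (c : F) :
    subAct F (Matrix.transvection 0 1 c)
        (∑ i ∈ Finset.Icc k ((q ^ m - q) / (q - 1)),
          X 0 ^ (((q ^ m - q) / (q - 1) + k - i) * (q - 1)) * X 1 ^ (i * (q - 1)))
      - (∑ i ∈ Finset.Icc k ((q ^ m - q) / (q - 1)),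
          X 0 ^ (((q ^ m - q) / (q - 1) + k - i) * (q - 1)) * X 1 ^ (i * (q - 1)))
      ∈ frobIdeal F 2 (q ^ m) := by
  have hq2 : 2 ≤ q := by
    have := Fintype.one_lt_card (α := F); omega
  obtain ⟨hNq, hA⟩ := numfacts q m hq2 hm
  set N := (q ^ m - q) / (q - 1) with hN
  set x : MvPolynomial (Fin 2) F := X 0 with hx
  set y : MvPolynomial (Fin 2) F := X 1 with hy
  set x' : MvPolynomial (Fin 2) F := x + C c * y with hx'
  have hS0 : subAct F (Matrix.transvection 0 1 c) (X 0) = x' := by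
    rw [subAct_transvection_X F 0 1 (by decide) c 0, if_pos rfl, hx', hx, hy]
  have hS1 : subAct F (Matrix.transvection 0 1 c) (X 1) = y := by
    rw [subAct_transvection_X F 0 1 (by decide) c 1, if_neg (by decide), add_zero, hy]
  set Y := ∑ i ∈ Finset.Icc k N, x ^ ((N + k - i) * (q - 1)) * y ^ (i * (q - 1)) with hY
  set SY := ∑ i ∈ Finset.Icc k N, x' ^ ((N + k - i) * (q - 1)) * y ^ (i * (q - 1)) with hSY'
  have hSY : subAct F (Matrix.transvection 0 1 c) Y = SY := by
    rw [hY, map_sum, hSY']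
    refine Finset.sum_congr rfl fun i _ => ?_
    rw [map_mul, map_pow, map_pow, hS0, hS1]
  rw [hSY]
  have hfq : ∀ u v : MvPolynomial (Fin 2) F, (u + v) ^ q = u ^ q + v ^ q := by
    intro u v; have h := frob_add q hq 1 u v; rwa [pow_one] at h
  have hfA : ∀ u v : MvPolynomial (Fin 2) F, (u + v) ^ q ^ m = u ^ q ^ m + v ^ q ^ m :=
    frob_add q hq m
  have hcq : (C c : MvPolynomial (Fin 2) F) ^ q = C c := by
    rw [← map_pow]; congr 1; rw [← hq]; exact FiniteField.pow_card c
  have hcA : (C c : MvPolynomial (Fin 2) F) ^ q ^ m = C c := by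
    rw [← map_pow]; congr 1; rw [← hq]; exact FiniteField.pow_card_pow m c
  have T1 := telescope x y q N k (by omega) hk
  have T2 := telescope x' y q N k (by omega) hk
  rw [hA] at T1 T2
  have hD : x' ^ q * y - x' * y ^ q = x ^ q * y - x * y ^ q := by
    rw [hx', hfq, mul_pow, hcq]; ring
  rw [hD] at T2
  set κ := k * (q - 1) + 1 with hκ
  have hxA : x' ^ q ^ m = x ^ q ^ m + C c * y ^ q ^ m := by
    rw [hx', hfA, mul_pow, hcA]
  have key : (x ^ q * y - x * y ^ q) * (SY - Y)
      = y ^ q ^ m * (C c * y ^ κ + x ^ κ - x' ^ κ) := by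
    rw [mul_sub, T1, T2, hxA]; ring
  have hyW : y ∣ (C c * y ^ κ + x ^ κ - x' ^ κ) := by
    have h1 : y ∣ C c * y ^ κ := Dvd.dvd.mul_left (dvd_pow_self y (by omega)) _
    have h4 : x' - x = y * C c := by rw [hx']; ring
    have h2 : y ∣ x' ^ κ - x ^ κ :=
      dvd_trans ⟨C c, h4⟩ (sub_dvd_pow_sub_pow x' x κ)
    have h5 : C c * y ^ κ + x ^ κ - x' ^ κ = C c * y ^ κ - (x' ^ κ - x ^ κ) := by ring
    rw [h5]; exact dvd_sub h1 h2
  obtain ⟨W1, hW1⟩ := hyW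
  have hE : x ^ q * y - x * y ^ q = y * (x ^ q - x * y ^ (q - 1)) := by
    have h6 : y ^ q = y ^ (q - 1) * y := by
      rw [← pow_succ]; congr 1; omega
    rw [h6]; ring
  have hy0 : y ≠ 0 := MvPolynomial.X_ne_zero 1
  have hcan : (x ^ q - x * y ^ (q - 1)) * (SY - Y) = y ^ q ^ m * W1 := by
    have hml : y * ((x ^ q - x * y ^ (q - 1)) * (SY - Y)) = y * (y ^ q ^ m * W1) := by
      rw [← mul_assoc, ← hE, key, hW1]; ring
    exact mul_left_cancel₀ hy0 hml
  have hyE : ¬ y ∣ (x ^ q - x * y ^ (q - 1)) := by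
    intro hdvd
    obtain ⟨t, ht⟩ := hdvd
    have h7 := congrArg (MvPolynomial.eval ![(1 : F), 0]) ht
    simp only [map_sub, map_mul, map_pow, hx, hy, MvPolynomial.eval_X,
      Matrix.cons_val_zero, Matrix.cons_val_one, Matrix.head_cons] at h7
    rw [zero_pow (show q - 1 ≠ 0 by omega), one_pow] at h7
    simp at h7
  have hdvdP : y ^ q ^ m ∣ (SY - Y) :=
    (prime_X1 (F := F)).pow_dvd_of_dvd_mul_left (q ^ m) hyE ⟨W1, hcan⟩
  obtain ⟨Z, hZ⟩ := hdvdP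
  rw [hZ]
  exact Ideal.mul_mem_right _ _ (Ideal.subset_span ⟨1, rfl⟩)

/-- Lower transvection case : `X 1 ↦ c • X 0 + X 1`. -/
theorem lower_mem (q m k : ℕ) (hq : Fintype.card F = q) (hm : 1 ≤ m)
    (hk : k ≤ (q ^ m - q) / (q - 1)) (c : F) :
    subAct F (Matrix.transvection 1 0 c)
        (∑ i ∈ Finset.Icc k ((q ^ m - q) / (q - 1)),
          X 0 ^ (((q ^ m - q) / (q - 1) + k - i) * (q - 1)) * X 1 ^ (i * (q - 1)))
      - (∑ i ∈ Finset.Icc k ((q ^ m - q) / (q - 1)),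
          X 0 ^ (((q ^ m - q) / (q - 1) + k - i) * (q - 1)) * X 1 ^ (i * (q - 1)))
      ∈ frobIdeal F 2 (q ^ m) := by
  have hq2 : 2 ≤ q := by
    have := Fintype.one_lt_card (α := F); omega
  obtain ⟨hNq, hA⟩ := numfacts q m hq2 hm
  set N := (q ^ m - q) / (q - 1) with hN
  set x : MvPolynomial (Fin 2) F := X 0 with hx
  set y : MvPolynomial (Fin 2) F := X 1 with hy
  set y' : MvPolynomial (Fin 2) F := y + C c * x with hy'
  have hS0 : subAct F (Matrix.transvection 1 0 c) (X 0) = x := by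
    rw [subAct_transvection_X F 1 0 (by decide) c 0, if_neg (by decide), add_zero, hx]
  have hS1 : subAct F (Matrix.transvection 1 0 c) (X 1) = y' := by
    rw [subAct_transvection_X F 1 0 (by decide) c 1, if_pos rfl, hy', hx, hy]
  set Y := ∑ i ∈ Finset.Icc k N, x ^ ((N + k - i) * (q - 1)) * y ^ (i * (q - 1)) with hY
  set SY := ∑ i ∈ Finset.Icc k N, x ^ ((N + k - i) * (q - 1)) * y' ^ (i * (q - 1)) with hSY'
  have hSY : subAct F (Matrix.transvection 1 0 c) Y = SY := by
    rw [hY, map_sum, hSY']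
    refine Finset.sum_congr rfl fun i _ => ?_
    rw [map_mul, map_pow, map_pow, hS0, hS1]
  rw [hSY]
  have hfq : ∀ u v : MvPolynomial (Fin 2) F, (u + v) ^ q = u ^ q + v ^ q := by
    intro u v; have h := frob_add q hq 1 u v; rwa [pow_one] at h
  have hfA : ∀ u v : MvPolynomial (Fin 2) F, (u + v) ^ q ^ m = u ^ q ^ m + v ^ q ^ m :=
    frob_add q hq m
  have hcq : (C c : MvPolynomial (Fin 2) F) ^ q = C c := by
    rw [← map_pow]; congr 1; rw [← hq]; exact FiniteField.pow_card c
  have hcA : (C c : MvPolynomial (Fin 2) F) ^ q ^ m = C c := by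
    rw [← map_pow]; congr 1; rw [← hq]; exact FiniteField.pow_card_pow m c
  have T1 := telescope x y q N k (by omega) hk
  have T2 := telescope x y' q N k (by omega) hk
  rw [hA] at T1 T2
  have hD : x ^ q * y' - x * y' ^ q = x ^ q * y - x * y ^ q := by
    rw [hy', hfq, mul_pow, hcq]; ring
  rw [hD] at T2
  set κ := k * (q - 1) + 1 with hκ
  have hyA : y' ^ q ^ m = y ^ q ^ m + C c * x ^ q ^ m := by
    rw [hy', hfA, mul_pow, hcA]
  have key : (x ^ q * y - x * y ^ q) * (SY - Y)
      = x ^ q ^ m * (y' ^ κ - y ^ κ - C c * x ^ κ) := by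
    rw [mul_sub, T1, T2, hyA]; ring
  have hxW : x ∣ (y' ^ κ - y ^ κ - C c * x ^ κ) := by
    have h1 : x ∣ C c * x ^ κ := Dvd.dvd.mul_left (dvd_pow_self x (by omega)) _
    have h4 : y' - y = x * C c := by rw [hy']; ring
    have h2 : x ∣ y' ^ κ - y ^ κ :=
      dvd_trans ⟨C c, h4⟩ (sub_dvd_pow_sub_pow y' y κ)
    exact dvd_sub h2 h1
  obtain ⟨W1, hW1⟩ := hxW
  have hE : x ^ q * y - x * y ^ q = x * (x ^ (q - 1) * y - y ^ q) := by
    have h6 : x ^ q = x ^ (q - 1) * x := by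
      rw [← pow_succ]; congr 1; omega
    rw [h6]; ring
  have hx0 : x ≠ 0 := MvPolynomial.X_ne_zero 0
  have hcan : (x ^ (q - 1) * y - y ^ q) * (SY - Y) = x ^ q ^ m * W1 := by
    have hml : x * ((x ^ (q - 1) * y - y ^ q) * (SY - Y)) = x * (x ^ q ^ m * W1) := by
      rw [← mul_assoc, ← hE, key, hW1]; ring
    exact mul_left_cancel₀ hx0 hml
  have hxE : ¬ x ∣ (x ^ (q - 1) * y - y ^ q) := by
    intro hdvd
    obtain ⟨t, ht⟩ := hdvd
    have h7 := congrArg (MvPolynomial.eval ![(0 : F), 1]) ht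
    simp only [map_sub, map_mul, map_pow, hx, hy, MvPolynomial.eval_X,
      Matrix.cons_val_zero, Matrix.cons_val_one, Matrix.head_cons] at h7
    rw [zero_pow (show q - 1 ≠ 0 by omega), one_pow] at h7
    simp at h7
  have hdvdP : x ^ q ^ m ∣ (SY - Y) :=
    (prime_X0 (F := F)).pow_dvd_of_dvd_mul_left (q ^ m) hxE ⟨W1, hcan⟩
  obtain ⟨Z, hZ⟩ := hdvdP
  rw [hZ]
  exact Ideal.mul_mem_right _ _ (Ideal.subset_span ⟨0, rfl⟩)

/-- The "good" predicate: substitution preserves the ideal and fixes `Y` mod the ideal. -/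
def Good (F : Type) [Field F] (A : ℕ) (Y : MvPolynomial (Fin 2) F)
    (M : Matrix (Fin 2) (Fin 2) F) : Prop :=
  (∀ z ∈ frobIdeal F 2 A, subAct F M z ∈ frobIdeal F 2 A) ∧
    subAct F M Y - Y ∈ frobIdeal F 2 A

omit [Fintype F] in
theorem good_mul (A : ℕ) (Y : MvPolynomial (Fin 2) F) (M M' : Matrix (Fin 2) (Fin 2) F)
    (hM : Good F A Y M) (hM' : Good F A Y M') : Good F A Y (M * M') := by
  obtain ⟨hM1, hM2⟩ := hM
  obtain ⟨hM'1, hM'2⟩ := hM'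
  constructor
  · intro z hz
    rw [subAct_mul]
    exact hM'1 _ (hM1 z hz)
  · rw [subAct_mul]
    have h1 : subAct F M Y = Y + (subAct F M Y - Y) := by ring
    rw [h1, map_add]
    have h2 : subAct F M' Y + subAct F M' (subAct F M Y - Y) - Y
        = (subAct F M' Y - Y) + subAct F M' (subAct F M Y - Y) := by ring
    rw [h2]
    exact Ideal.add_mem _ hM'2 (hM'1 _ hM2)

omit [Fintype F] in
theorem good_one (A : ℕ) (Y : MvPolynomial (Fin 2) F) : Good F A Y 1 := by
  have hone : subAct F (1 : Matrix (Fin 2) (Fin 2) F) = AlgHom.id F _ := by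
    apply MvPolynomial.algHom_ext
    intro i
    rw [subAct_X]
    fin_cases i <;> simp [Matrix.one_apply]
  constructor
  · intro z hz; rw [hone]; exact hz
  · rw [hone]; simpa using Ideal.zero_mem (frobIdeal F 2 A)

omit [Fintype F] in
theorem mem_ideal (A : ℕ) (M : Matrix (Fin 2) (Fin 2) F)
    (hgen : ∀ i : Fin 2, subAct F M (X i ^ A) ∈ frobIdeal F 2 A) :
    ∀ z ∈ frobIdeal F 2 A, subAct F M z ∈ frobIdeal F 2 A := by
  intro z hz
  have hle : frobIdeal F 2 A ≤ Ideal.comap (subAct F M).toRingHom (frobIdeal F 2 A) := by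
    rw [frobIdeal, Ideal.span_le]
    rintro _ ⟨i, rfl⟩
    exact hgen i
  exact hle hz

theorem good_transvection (q m k : ℕ) (hq : Fintype.card F = q) (hm : 1 ≤ m)
    (hk : k ≤ (q ^ m - q) / (q - 1)) (t : Matrix.TransvectionStruct (Fin 2) F) :
    Good F (q ^ m)
      (∑ i ∈ Finset.Icc k ((q ^ m - q) / (q - 1)),
        X 0 ^ (((q ^ m - q) / (q - 1) + k - i) * (q - 1)) * X 1 ^ (i * (q - 1)))
      t.toMatrix := by
  obtain ⟨a, b, hab, c⟩ := t
  rw [Matrix.TransvectionStruct.toMatrix_mk]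
  constructor
  · refine mem_ideal (q ^ m) _ fun i => ?_
    rw [map_pow, subAct_transvection_X F a b hab c i]
    by_cases hia : i = a
    · rw [if_pos hia]
      rw [frob_add q hq m, mul_pow, ← map_pow]
      refine Ideal.add_mem _ ?_ ?_
      · exact Ideal.subset_span ⟨i, rfl⟩
      · exact Ideal.mul_mem_left _ _ (Ideal.subset_span ⟨b, rfl⟩)
    · rw [if_neg hia, add_zero]
      exact Ideal.subset_span ⟨i, rfl⟩
  · fin_cases a <;> fin_cases b
    · exact absurd rfl hab
    · exact upper_mem q m k hq hm hk c
    · exact lower_mem q m k hq hm hk c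
    · exact absurd rfl hab

theorem good_diagonal (q m k : ℕ) (hq : Fintype.card F = q) (d : Fin 2 → F)
    (hd : ∀ i, d i ≠ 0) :
    Good F (q ^ m)
      (∑ i ∈ Finset.Icc k ((q ^ m - q) / (q - 1)),
        X 0 ^ (((q ^ m - q) / (q - 1) + k - i) * (q - 1)) * X 1 ^ (i * (q - 1)))
      (Matrix.diagonal d) := by
  have hpow1 : ∀ (a : F) (t : ℕ), a ≠ 0 → a ^ (t * (q - 1)) = 1 := by
    intro a t ha
    rw [pow_mul]
    have h := FiniteField.pow_card_sub_one_eq_one (a ^ t) (pow_ne_zero t ha)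
    rwa [hq] at h
  constructor
  · refine mem_ideal (q ^ m) _ fun i => ?_
    rw [map_pow, subAct_diagonal_X, mul_pow, ← map_pow]
    exact Ideal.mul_mem_left _ _ (Ideal.subset_span ⟨i, rfl⟩)
  · have hfix : subAct F (Matrix.diagonal d)
        (∑ i ∈ Finset.Icc k ((q ^ m - q) / (q - 1)),
          X 0 ^ (((q ^ m - q) / (q - 1) + k - i) * (q - 1)) * X 1 ^ (i * (q - 1)))
        = ∑ i ∈ Finset.Icc k ((q ^ m - q) / (q - 1)),
          X 0 ^ (((q ^ m - q) / (q - 1) + k - i) * (q - 1)) * X 1 ^ (i * (q - 1)) := by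
      rw [map_sum]
      refine Finset.sum_congr rfl fun i _ => ?_
      rw [map_mul, map_pow, map_pow, subAct_diagonal_X, subAct_diagonal_X, mul_pow, mul_pow,
        ← map_pow, ← map_pow, hpow1 _ _ (hd 0), hpow1 _ _ (hd 1)]
      simp
    rw [hfix]
    simpa using Ideal.zero_mem (frobIdeal F 2 (q ^ m))

end Main

end Statement10Aux

open Statement10Aux in
/-- with `N = (q^m-q)/(q-1)`, for `0 ≤ k' ≤ N` the element
`y_{k'} = ∑_{i=k'}^{N} x_1^{(N+k'-i)(q-1)} x_2^{i(q-1)}` of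
`Q = F_q[x_1,x_2]/(x_1^{q^m},x_2^{q^m})` is `GL_2(F_q)`-invariant. -/
theorem statement10 (F : Type) [Field F] [Fintype F] (q : ℕ) (hq : Fintype.card F = q)
    (m : ℕ) (hm : 1 ≤ m) (k' : ℕ) (hk' : k' ≤ (q ^ m - q) / (q - 1))
    (g : GL (Fin 2) F) :
    Ideal.Quotient.mk (frobIdeal F 2 (q ^ m))
        (glAct F 2 g
          (∑ i ∈ Finset.Icc k' ((q ^ m - q) / (q - 1)),
            MvPolynomial.X 0 ^ (((q ^ m - q) / (q - 1) + k' - i) * (q - 1)) *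
              MvPolynomial.X 1 ^ (i * (q - 1))))
      = Ideal.Quotient.mk (frobIdeal F 2 (q ^ m))
          (∑ i ∈ Finset.Icc k' ((q ^ m - q) / (q - 1)),
            MvPolynomial.X 0 ^ (((q ^ m - q) / (q - 1) + k' - i) * (q - 1)) *
              MvPolynomial.X 1 ^ (i * (q - 1))) := by
  classical
  set Y : MvPolynomial (Fin 2) F :=
    ∑ i ∈ Finset.Icc k' ((q ^ m - q) / (q - 1)),
      X 0 ^ (((q ^ m - q) / (q - 1) + k' - i) * (q - 1)) * X 1 ^ (i * (q - 1)) with hY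
  have good_list : ∀ L : List (Matrix.TransvectionStruct (Fin 2) F),
      Good F (q ^ m) Y (L.map Matrix.TransvectionStruct.toMatrix).prod := by
    intro L
    induction L with
    | nil => simpa using good_one (q ^ m) Y
    | cons t L ih =>
      rw [List.map_cons, List.prod_cons]
      exact good_mul _ _ _ _ (good_transvection q m k' hq hm hk' t) ih
  obtain ⟨L, L', d, hdecomp⟩ :=
    Matrix.Pivot.exists_list_transvec_mul_diagonal_mul_list_transvec (g : Matrix (Fin 2) (Fin 2) F)
  have hdet : (g : Matrix (Fin 2) (Fin 2) F).det ≠ 0 := by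
    have h1 : IsUnit (g : Matrix (Fin 2) (Fin 2) F) := ⟨g, rfl⟩
    have h2 := (Matrix.isUnit_iff_isUnit_det _).mp h1
    exact h2.ne_zero
  have hd : ∀ i, d i ≠ 0 := by
    have h1 : (g : Matrix (Fin 2) (Fin 2) F).det
        = ((L.map Matrix.TransvectionStruct.toMatrix).prod).det * (Matrix.diagonal d).det *
          ((L'.map Matrix.TransvectionStruct.toMatrix).prod).det := by
      rw [hdecomp, Matrix.det_mul, Matrix.det_mul]
    rw [Matrix.TransvectionStruct.det_toMatrix_prod, Matrix.TransvectionStruct.det_toMatrix_prod,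
      Matrix.det_diagonal, Fin.prod_univ_two] at h1
    intro i hi
    apply hdet
    rw [h1]
    fin_cases i <;> simp_all
  have hGoodg : Good F (q ^ m) Y (g : Matrix (Fin 2) (Fin 2) F) := by
    rw [hdecomp]
    exact good_mul _ _ _ _ (good_mul _ _ _ _ (good_list L) (good_diagonal q m k' hq d hd))
      (good_list L')
  have hglAct : glAct F 2 g Y = subAct F (g : Matrix (Fin 2) (Fin 2) F) Y := rfl
  rw [hglAct, Ideal.Quotient.eq]
  exact hGoodg.2
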